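/- Let L ⊣ R : D ⇄ C be an adjunction with D cartesian, and W an object of D such that the counit of the sliced adjunction L_W ⊣ R_W : D/W ⇄ C/LW is an isomorphism. Suppose that for every object X_φ of C/LW, the unit η^W of the sliced adjunction is an isomorphism at W*Σ_W R_W(X_φ). Then for any object V_f of D/W: η^W at W*V (i.e. at the object π₁ : W×V → W) is an isomorphism if and only if η^W at V_f is an isomorphism. -/

import Mathlib

open CategoryTheory Limits

/-- In a reflective subcategory situation, the essential image of the right adjoint is
closed under limits that exist in the ambient category. -/
lemma limit_mem_essImage_of_reflective {C D : Type*} [Category C] [Category D]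
    {J : Type*} [Category J] (R : D ⥤ C) [Reflective R] (F : J ⥤ C) [HasLimit F]
    (h : ∀ j, R.essImage (F.obj j)) : R.essImage (limit F) := by
  have hiso : ∀ j, IsIso ((reflectorAdjunction R).unit.app (F.obj j)) :=
    fun j => Functor.essImage.unit_isIso (h j)
  let e : F ≅ (F ⋙ reflector R) ⋙ R :=
    NatIso.ofComponents (fun j => asIso ((reflectorAdjunction R).unit.app (F.obj j)))
      (fun f => by simp)
  haveI := monadicCreatesLimits.{_, _} R
  haveI : HasLimit ((F ⋙ reflector R) ⋙ R) := hasLimit_of_iso e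
  haveI : HasLimit (F ⋙ reflector R) := hasLimit_of_created _ R
  exact ⟨limit (F ⋙ reflector R),
    ⟨preservesLimitIso R _ ≪≫ HasLimit.isoOfNatIso e.symm⟩⟩

lemma star_obj_hom_fst {D : Type*} [Category D] [HasFiniteLimits D] (W X : D) :
    ((Over.star W).obj X).hom = prod.fst := by
  simp
  exact prod.lift_fst _ _

/-- **technical lemma.** Let `L ⊣ R : D ⇄ C` be an adjunction with `D`
cartesian, and `W` an object of `D` such that the counit of the sliced adjunction
`L_W ⊣ R_W : D/W ⇄ C/LW` (with `L_W = Over.post L` and right adjoint `R_W` given by the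
adjunction data `adjW`) is an isomorphism.  Suppose that for every object `X` of `C/LW`
the unit `η^W` of the sliced adjunction is an isomorphism at `W*Σ_W R_W(X)` (here
`Σ_W = Over.forget W` and `W* = Over.star W`).  Then for any object `V_f` of `D/W`,
`η^W` at `W*V` is an isomorphism iff `η^W` at `V_f` is an isomorphism. -/
theorem stmt4 {D C : Type*} [Category D] [Category C] [HasFiniteLimits D]
    (L : D ⥤ C) (R : C ⥤ D) (adj : L ⊣ R) (W : D)
    (RW : Over (L.obj W) ⥤ Over W)
    (adjW : (Over.post L : Over W ⥤ Over (L.obj W)) ⊣ RW)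
    (hcounit : IsIso adjW.counit)
    (hunit : ∀ X : Over (L.obj W),
      IsIso (adjW.unit.app ((Over.star W).obj ((Over.forget W).obj (RW.obj X))))) :
    ∀ V : Over W,
      IsIso (adjW.unit.app ((Over.star W).obj V.left)) ↔ IsIso (adjW.unit.app V) := by
  haveI := hcounit
  haveI : RW.Full := adjW.fullyFaithfulROfIsIsoCounit.full
  haveI : RW.Faithful := adjW.fullyFaithfulROfIsIsoCounit.faithful
  haveI : Reflective RW := { L := Over.post L, adj := adjW }
  intro V
  constructor
  · intro hV
    -- W*W is in the essential image of RW
    have hT : IsTerminal (RW.obj (Over.mk (𝟙 (L.obj W)))) := by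
      haveI := adjW.rightAdjoint_preservesLimits
      exact IsTerminal.isTerminalObj RW _ Over.mkIdTerminal
    have eW : (RW.obj (Over.mk (𝟙 (L.obj W)))).left ≅ W :=
      (Over.forget W).mapIso (hT.uniqueUpToIso Over.mkIdTerminal)
    have hWW : IsIso (adjW.unit.app ((Over.star W).obj W)) := by
      rw [← NatTrans.isIso_app_iff_of_iso adjW.unit ((Over.star W).mapIso eW)]
      exact hunit (Over.mk (𝟙 (L.obj W)))
    -- set up the equalizer diagram
    let a : (Over.star W).obj V.left ⟶ (Over.star W).obj W := (Over.star W).map V.hom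
    let b : (Over.star W).obj V.left ⟶ (Over.star W).obj W :=
      Over.homMk (prod.lift prod.fst prod.fst) (by rw [star_obj_hom_fst, star_obj_hom_fst]; exact prod.lift_fst _ _)
    let F := parallelPair a b
    have hmem : ∀ j, RW.essImage (F.obj j) := by
      intro j
      cases j
      · exact (adjW.isIso_unit_app_iff_mem_essImage).mp hV
      · exact (adjW.isIso_unit_app_iff_mem_essImage).mp hWW
    have hlim : RW.essImage (limit F) := limit_mem_essImage_of_reflective RW F hmem
    -- V is a limit of F
    let ι : V ⟶ (Over.star W).obj V.left :=
      Over.homMk (prod.lift V.hom (𝟙 V.left)) (by rw [star_obj_hom_fst]; exact prod.lift_fst _ _)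
    have hw : ι ≫ a = ι ≫ b := by
      ext
      apply Limits.prod.hom_ext
      · change (prod.lift V.hom (𝟙 V.left) ≫ prod.map (𝟙 W) V.hom) ≫ prod.fst =
          (prod.lift V.hom (𝟙 V.left) ≫ prod.lift prod.fst prod.fst) ≫ prod.fst
        simp [ι, a, b, prod.lift_fst, prod.lift_snd]
      · change (prod.lift V.hom (𝟙 V.left) ≫ prod.map (𝟙 W) V.hom) ≫ prod.snd =
          (prod.lift V.hom (𝟙 V.left) ≫ prod.lift prod.fst prod.fst) ≫ prod.snd
        simp [ι, a, b, prod.lift_fst, prod.lift_snd]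
    let c : Fork a b := Fork.ofι ι hw
    have key : ∀ s : Fork a b, s.ι.left ≫ prod.snd ≫ V.hom = s.pt.hom := by
      intro s
      have h1 : s.ι.left ≫ prod.map (𝟙 W) V.hom = s.ι.left ≫ prod.lift prod.fst prod.fst := by
        have h0 := congrArg CommaMorphism.left s.condition
        exact h0
      have h2 := congrArg (fun t => t ≫ prod.snd) h1
      have h3 : s.ι.left ≫ prod.fst = s.pt.hom := by
        rw [← star_obj_hom_fst]; exact Over.w s.ι
      rw [← h3]
      have h4 : s.ι.left ≫ prod.snd ≫ V.hom = s.ι.left ≫ prod.map (𝟙 W) V.hom ≫ prod.snd :=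
        whisker_eq s.ι.left (prod.map_snd (𝟙 W) V.hom).symm
      exact h4.trans
        ((Category.assoc s.ι.left (prod.map (𝟙 W) V.hom) prod.snd).symm.trans
        (h2.trans ((Category.assoc _ _ _).trans
          (whisker_eq s.ι.left (prod.lift_snd _ _)))))
    have hcl : IsLimit c := by
      refine Fork.IsLimit.mk c (fun s => Over.homMk (s.ι.left ≫ prod.snd) (by exact (Category.assoc _ _ _).trans (key s)))
        ?_ ?_
      · intro s
        ext
        apply Limits.prod.hom_ext
        · have h3 : s.ι.left ≫ prod.fst = s.pt.hom := by
            rw [← star_obj_hom_fst]; exact Over.w s.ι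
          have := key s
          simp only [c, Fork.ι_ofι]
          change ((s.ι.left ≫ prod.snd) ≫ prod.lift V.hom (𝟙 V.left)) ≫ prod.fst = s.ι.left ≫ prod.fst
          exact (Category.assoc _ _ _).trans
            ((congrArg (fun t : V.left ⟶ W => (s.ι.left ≫ prod.snd) ≫ t) (prod.lift_fst _ _)).trans
              ((Category.assoc _ _ _).trans (this.trans h3.symm)))
        · change ((s.ι.left ≫ prod.snd) ≫ prod.lift V.hom (𝟙 V.left)) ≫ prod.snd = s.ι.left ≫ prod.snd
          rw [Category.assoc, prod.lift_snd, Category.comp_id]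
      · intro s m hm
        have hm' := congrArg CommaMorphism.left hm
        ext
        have := congrArg (fun t => t ≫ prod.snd) hm'
        refine Eq.trans ?_ this
        change m.left = (m.left ≫ prod.lift V.hom (𝟙 V.left)) ≫ prod.snd
        rw [Category.assoc, prod.lift_snd]
        exact (Category.comp_id _).symm
    have e : V ≅ limit F := hcl.conePointUniqueUpToIso (limit.isLimit F)
    exact (adjW.isIso_unit_app_iff_mem_essImage).mpr (Functor.essImage.ofIso e.symm hlim)
  · intro hV
    have hmem : RW.essImage V := (adjW.isIso_unit_app_iff_mem_essImage).mp hV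
    obtain ⟨A, ⟨e⟩⟩ := hmem
    exact (NatTrans.isIso_app_iff_of_iso adjW.unit
      ((Over.star W).mapIso ((Over.forget W).mapIso e))).mp (hunit A)
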